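/- arXiv:1908.04770 — 6 statements merged into one kernel-verified Lean document; each statement's English description precedes it below -/
import Mathlib

section
/- For every positive integer M, the M×M matrix A'_M with entries A'_M(i,j) = binom(3M-i, 2M-j) for 1 ≤ i,j ≤ M has determinant det(A'_M) = ∏_{i=0}^{M-1} i!·(i+2M)! / ((i+M)!)^2; in particular this determinant is strictly positive. -/
open Finset

theorem stmt2 (M : ℕ) (hM : 0 < M) :
    Matrix.det (Matrix.of fun i j : Fin M =>
        (((3*M - ((i : ℕ) + 1)).choose (2*M - ((j : ℕ) + 1)) : ℚ)))
      = ∏ i ∈ Finset.range M,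
          (((Nat.factorial i : ℚ) * (Nat.factorial (i + 2*M) : ℚ))
            / ((Nat.factorial (i + M) : ℚ))^2) ∧
    0 < Matrix.det (Matrix.of fun i j : Fin M =>
        (((3*M - ((i : ℕ) + 1)).choose (2*M - ((j : ℕ) + 1)) : ℚ))) := by
  obtain ⟨m, rfl⟩ : ∃ m, M = m + 1 := ⟨M - 1, by omega⟩
  set M := m + 1 with hMdef
  have hdet : Matrix.det (Matrix.of fun i j : Fin M =>
        (((3*M - ((i : ℕ) + 1)).choose (2*M - ((j : ℕ) + 1)) : ℚ)))
      = ∏ i ∈ Finset.range M,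
          (((Nat.factorial i : ℚ) * (Nat.factorial (i + 2*M) : ℚ))
            / ((Nat.factorial (i + M) : ℚ))^2) := by
    -- Step 1: reverse rows and columns
    have h1 : Matrix.det (Matrix.of fun i j : Fin M =>
          (((3*M - ((i : ℕ) + 1)).choose (2*M - ((j : ℕ) + 1)) : ℚ)))
        = Matrix.det (Matrix.of fun i j : Fin M =>
          (((2*M + (i : ℕ)).choose (M + (j : ℕ)) : ℚ))) := by
      rw [← Matrix.det_submatrix_equiv_self Fin.revPerm
          (Matrix.of fun i j : Fin M =>
            (((3*M - ((i : ℕ) + 1)).choose (2*M - ((j : ℕ) + 1)) : ℚ)))]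
      congr 1
      ext i j
      have hi := i.isLt
      have hj := j.isLt
      simp only [Matrix.submatrix_apply, Matrix.of_apply, Fin.revPerm_apply, Fin.val_rev]
      congr 2 <;> omega
    -- entrywise factorization
    have hent : ∀ i j : Fin M, ((2*M + (i:ℕ)).choose (M + (j:ℕ)) : ℚ)
        = (((2*M + (i:ℕ)).factorial : ℚ) / ((M + (i:ℕ)).factorial : ℚ)) *
          ((1 / ((M + (j:ℕ)).factorial : ℚ)) *
            ((descPochhammer ℚ (j:ℕ)).eval (((M + (i:ℕ) : ℕ)) : ℚ))) := by
      intro i j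
      have hj : (j:ℕ) ≤ M + i := by have := j.isLt; omega
      have hle : M + (j:ℕ) ≤ 2*M + i := by have := j.isLt; omega
      rw [descPochhammer_eval_eq_descFactorial ℚ (M + (i:ℕ)) (j:ℕ),
        Nat.cast_choose ℚ hle]
      have hfac : ((M + (i:ℕ)) - (j:ℕ)).factorial * (M + (i:ℕ)).descFactorial (j:ℕ)
          = (M + (i:ℕ)).factorial := Nat.factorial_mul_descFactorial hj
      have hfacQ : (((M + (i:ℕ)) - (j:ℕ)).factorial : ℚ)
            * ((M + (i:ℕ)).descFactorial (j:ℕ) : ℚ) = ((M + (i:ℕ)).factorial : ℚ) := by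
        exact_mod_cast congrArg (fun n : ℕ => (n : ℚ)) hfac
      have h2 : (2*M + (i:ℕ)) - (M + (j:ℕ)) = (M + (i:ℕ)) - (j:ℕ) := by omega
      rw [h2, ← hfacQ]
      have f1 : (((M + (j:ℕ)).factorial : ℚ)) ≠ 0 :=
        Nat.cast_ne_zero.mpr (Nat.factorial_ne_zero _)
      have f2 : ((((M + (i:ℕ)) - (j:ℕ)).factorial : ℚ)) ≠ 0 :=
        Nat.cast_ne_zero.mpr (Nat.factorial_ne_zero _)
      have f3 : (((M + (i:ℕ)).descFactorial (j:ℕ) : ℚ)) ≠ 0 := by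
        have : ¬ (M + (i:ℕ)) < (j:ℕ) := by omega
        exact Nat.cast_ne_zero.mpr (fun h => this (Nat.descFactorial_eq_zero_iff_lt.mp h))
      field_simp
    -- Step 2: pull out row and column factors
    have h3 : Matrix.det (Matrix.of fun i j : Fin M =>
          (((2*M + (i:ℕ)).choose (M + (j:ℕ)) : ℚ)))
        = (∏ i : Fin M, (((2*M + (i:ℕ)).factorial : ℚ) / ((M + (i:ℕ)).factorial : ℚ))) *
          ((∏ j : Fin M, (1 / ((M + (j:ℕ)).factorial : ℚ))) *
            Matrix.det (Matrix.of fun i j : Fin M =>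
              ((descPochhammer ℚ (j:ℕ)).eval (((M + (i:ℕ) : ℕ)) : ℚ)))) := by
      have : (Matrix.of fun i j : Fin M => (((2*M + (i:ℕ)).choose (M + (j:ℕ)) : ℚ)))
          = Matrix.of (fun i j : Fin M =>
              (((2*M + (i:ℕ)).factorial : ℚ) / ((M + (i:ℕ)).factorial : ℚ)) *
              (Matrix.of (fun i j : Fin M => (1 / ((M + (j:ℕ)).factorial : ℚ)) *
                (Matrix.of fun i j : Fin M =>
                  ((descPochhammer ℚ (j:ℕ)).eval (((M + (i:ℕ) : ℕ)) : ℚ))) i j) i j)) := by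
        ext i j
        simpa using hent i j
      rw [this, Matrix.det_mul_column, Matrix.det_mul_row]
    -- Step 3: the Vandermonde determinant
    have h4 : Matrix.det (Matrix.of fun i j : Fin M =>
          ((descPochhammer ℚ (j:ℕ)).eval (((M + (i:ℕ) : ℕ)) : ℚ)))
        = ∏ i ∈ Finset.range M, (Nat.factorial i : ℚ) := by
      rw [← Matrix.det_eval_matrixOfPolynomials_eq_det_vandermonde
          (fun i : Fin M => (((M + (i:ℕ) : ℕ)) : ℚ))
          (fun j : Fin M => descPochhammer ℚ (j:ℕ))
          (fun j => descPochhammer_natDegree ℚ (j:ℕ))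
          (fun j => monic_descPochhammer ℚ (j:ℕ))]
      have : (fun i : Fin M => (((M + (i:ℕ) : ℕ)) : ℚ))
          = fun i : Fin M => ((i : ℚ) + (M : ℚ)) := by
        funext i; push_cast; ring
      rw [this, Matrix.det_vandermonde_add (fun i : Fin M => ((i : ℕ) : ℚ)) (M : ℚ),
        Matrix.det_vandermonde_id_eq_superFactorial (R := ℚ) m]
      rw [← Nat.prod_range_succ_factorial m]
      push_cast
      rfl
    rw [h1, h3, h4]
    -- Step 4: combine the products
    rw [Fin.prod_univ_eq_prod_range (fun i => (((2*M + i).factorial : ℚ) / ((M + i).factorial : ℚ))) M,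
      Fin.prod_univ_eq_prod_range (fun j => (1 / ((M + j).factorial : ℚ))) M,
      ← Finset.prod_mul_distrib, ← Finset.prod_mul_distrib]
    refine Finset.prod_congr rfl fun i hi => ?_
    have f1 : (((M + i).factorial : ℚ)) ≠ 0 := Nat.cast_ne_zero.mpr (Nat.factorial_ne_zero _)
    have e1 : 2*M + i = i + 2*M := by omega
    have e2 : M + i = i + M := by omega
    rw [e1, e2]
    field_simp
  refine ⟨hdet, ?_⟩
  rw [hdet]
  apply Finset.prod_pos
  intro i _
  have p1 : (0:ℚ) < (Nat.factorial i : ℚ) := by exact_mod_cast Nat.factorial_pos i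
  have p2 : (0:ℚ) < (Nat.factorial (i + 2*M) : ℚ) := by exact_mod_cast Nat.factorial_pos _
  have p3 : (0:ℚ) < (Nat.factorial (i + M) : ℚ) := by exact_mod_cast Nat.factorial_pos _
  positivity
end

section
/- For every positive integer M, the M×M matrix C'_M with entries C'_M(i,j) = binom(3M+1-i, 2M+1-j) for 1 ≤ i,j ≤ M has determinant det(C'_M) = ∏_{i=0}^{M} i!·(i+2M)! / ((M+i)!)^2, which is strictly positive. -/
open Finset

private lemma fac_ne (k : ℕ) : ((k.factorial : ℚ)) ≠ 0 :=
  Nat.cast_ne_zero.mpr (Nat.factorial_ne_zero k)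

theorem stmt3 (M : ℕ) (hM : 0 < M) :
    Matrix.det (Matrix.of fun i j : Fin M =>
        (((3*M + 1 - ((i : ℕ) + 1)).choose (2*M + 1 - ((j : ℕ) + 1)) : ℚ)))
      = ∏ i ∈ Finset.range (M + 1),
          (((Nat.factorial i : ℚ) * (Nat.factorial (i + 2*M) : ℚ))
            / ((Nat.factorial (M + i) : ℚ))^2) ∧
    0 < Matrix.det (Matrix.of fun i j : Fin M =>
        (((3*M + 1 - ((i : ℕ) + 1)).choose (2*M + 1 - ((j : ℕ) + 1)) : ℚ))) := by
  obtain ⟨m, rfl⟩ : ∃ m, M = m + 1 := ⟨M - 1, (Nat.succ_pred_eq_of_pos hM).symm⟩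
  set M := m + 1 with hMdef
  -- Step 1 : reverse rows and columns
  have h1 : (Matrix.of fun i j : Fin M =>
        (((3*M + 1 - ((i : ℕ) + 1)).choose (2*M + 1 - ((j : ℕ) + 1)) : ℚ))).det
      = (Matrix.of fun i j : Fin M =>
        (((2*M + 1 + (i : ℕ)).choose (M + 1 + (j : ℕ)) : ℚ))).det := by
    rw [← Matrix.det_submatrix_equiv_self Fin.revPerm
        (Matrix.of fun i j : Fin M =>
        (((3*M + 1 - ((i : ℕ) + 1)).choose (2*M + 1 - ((j : ℕ) + 1)) : ℚ)))]
    congr 1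
    ext i j
    have hi := i.isLt
    have hj := j.isLt
    simp only [Matrix.submatrix_apply, Matrix.of_apply, Fin.revPerm_apply, Fin.val_rev]
    congr 2 <;> omega
  -- Step 2 : entrywise factorization
  have h2 : (Matrix.of fun i j : Fin M =>
        (((2*M + 1 + (i : ℕ)).choose (M + 1 + (j : ℕ)) : ℚ)))
      = (Matrix.of fun i j : Fin M =>
        (((M + 1 + (j : ℕ)).factorial : ℚ))⁻¹ *
          (((2*M + 1 + (i : ℕ)).factorial : ℚ) / ((M + (i : ℕ)).factorial : ℚ) *
            (((M + (i : ℕ)).descFactorial (j : ℕ) : ℚ)))) := by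
    ext i j
    have hi := i.isLt
    have hj := j.isLt
    have hle : M + 1 + (j : ℕ) ≤ 2*M + 1 + (i : ℕ) := by omega
    have hji : (j : ℕ) ≤ M + (i : ℕ) := by omega
    have hsub : 2*M + 1 + (i : ℕ) - (M + 1 + (j : ℕ)) = M + (i : ℕ) - (j : ℕ) := by omega
    have e2 : (((M + (i : ℕ)).descFactorial (j : ℕ) : ℚ))
        = ((M + (i : ℕ)).factorial : ℚ) / (((M + (i : ℕ) - (j : ℕ)).factorial : ℚ)) := by
      rw [eq_div_iff (fac_ne _)]
      exact_mod_cast (mul_comm _ _).trans (Nat.factorial_mul_descFactorial hji)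
    simp only [Matrix.of_apply]
    rw [Nat.cast_choose ℚ hle, hsub, e2]
    field_simp
  -- Step 3 : pull out the row and column factors
  have h3 : (Matrix.of fun i j : Fin M =>
        (((M + 1 + (j : ℕ)).factorial : ℚ))⁻¹ *
          (((2*M + 1 + (i : ℕ)).factorial : ℚ) / ((M + (i : ℕ)).factorial : ℚ) *
            (((M + (i : ℕ)).descFactorial (j : ℕ) : ℚ)))).det
      = (∏ j : Fin M, (((M + 1 + (j : ℕ)).factorial : ℚ))⁻¹) *
        ((∏ i : Fin M, ((2*M + 1 + (i : ℕ)).factorial : ℚ) / ((M + (i : ℕ)).factorial : ℚ)) *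
          (Matrix.of fun i j : Fin M =>
            (((M + (i : ℕ)).descFactorial (j : ℕ) : ℚ))).det) := by
    have s1 := Matrix.det_mul_row (fun j : Fin M => (((M + 1 + (j : ℕ)).factorial : ℚ))⁻¹)
        (Matrix.of fun i j : Fin M =>
          ((2*M + 1 + (i : ℕ)).factorial : ℚ) / ((M + (i : ℕ)).factorial : ℚ) *
            (((M + (i : ℕ)).descFactorial (j : ℕ) : ℚ)))
    have s2 := Matrix.det_mul_column (fun i : Fin M =>
          ((2*M + 1 + (i : ℕ)).factorial : ℚ) / ((M + (i : ℕ)).factorial : ℚ))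
        (Matrix.of fun i j : Fin M => (((M + (i : ℕ)).descFactorial (j : ℕ) : ℚ)))
    simp only [Matrix.of_apply] at s1 s2
    rw [s1, s2]
  -- Step 4 : the descending factorial determinant is a superfactorial
  have h4 : (Matrix.of fun i j : Fin M =>
        (((M + (i : ℕ)).descFactorial (j : ℕ) : ℚ))).det
      = (Nat.superFactorial m : ℚ) := by
    have hv := Matrix.det_eval_matrixOfPolynomials_eq_det_vandermonde
      (fun i : Fin M => ((M + (i : ℕ) : ℕ) : ℚ)) (fun j => descPochhammer ℚ (j : ℕ))
      (fun j => descPochhammer_natDegree ℚ (j : ℕ)) (fun j => monic_descPochhammer ℚ (j : ℕ))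
    simp only [descPochhammer_eval_eq_descFactorial] at hv
    rw [← hv]
    have : (fun i : Fin M => ((M + (i : ℕ) : ℕ) : ℚ))
        = fun i : Fin M => ((i : ℕ) : ℚ) + (M : ℚ) := by
      funext i; push_cast; ring
    rw [this, Matrix.det_vandermonde_add]
    have := Matrix.det_vandermonde_id_eq_superFactorial (R := ℚ) m
    rw [← this]
  rw [h1, h2, h3, h4]
  -- Step 5 : arithmetic with products of factorials
  rw [Fin.prod_univ_eq_prod_range (fun j => (((M + 1 + j).factorial : ℚ))⁻¹) M,
    Fin.prod_univ_eq_prod_range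
      (fun i => ((2*M + 1 + i).factorial : ℚ) / ((M + i).factorial : ℚ)) M]
  have hsf : (Nat.superFactorial m : ℚ) = ∏ i ∈ range M, (i.factorial : ℚ) := by
    rw [← Nat.prod_range_succ_factorial m]; push_cast; rfl
  rw [hsf]
  set a : ℚ := ∏ i ∈ range M, (i.factorial : ℚ) with ha
  set b : ℚ := ∏ i ∈ range M, ((2*M + 1 + i).factorial : ℚ) with hb
  set c : ℚ := ∏ i ∈ range M, ((M + 1 + i).factorial : ℚ) with hc
  set d : ℚ := ∏ i ∈ range M, ((M + i).factorial : ℚ) with hd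
  have hbd : (∏ i ∈ range M, ((2*M + 1 + i).factorial : ℚ) / ((M + i).factorial : ℚ))
      = b / d := by rw [prod_div_distrib]
  have hcinv : (∏ i ∈ range M, (((M + 1 + i).factorial : ℚ))⁻¹) = c⁻¹ := by
    rw [← prod_inv_distrib]
  rw [hbd, hcinv]
  have hT : (∏ i ∈ range (M + 1),
      ((i.factorial : ℚ) * ((i + 2*M).factorial : ℚ) / (((M + i).factorial : ℚ))^2))
      = (a * (M.factorial : ℚ)) * (b * ((2*M).factorial : ℚ)) /
        ((c * (M.factorial : ℚ)) * (d * ((2*M).factorial : ℚ))) := by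
    have e1 : ∏ i ∈ range (M + 1), (i.factorial : ℚ) = a * (M.factorial : ℚ) :=
      prod_range_succ _ _
    have e2 : ∏ i ∈ range (M + 1), ((i + 2*M).factorial : ℚ)
        = b * ((2*M).factorial : ℚ) := by
      rw [prod_range_succ' (fun i => ((i + 2*M).factorial : ℚ))]
      congr 1
      · apply prod_congr rfl; intro i _; congr 2; omega
      · congr 2; omega
    have e3 : ∏ i ∈ range (M + 1), ((M + i).factorial : ℚ)
        = c * (M.factorial : ℚ) := by
      rw [prod_range_succ' (fun i => ((M + i).factorial : ℚ))]
      congr 1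
      apply prod_congr rfl; intro i _; congr 2; omega
    have e4 : ∏ i ∈ range (M + 1), ((M + i).factorial : ℚ)
        = d * ((2*M).factorial : ℚ) := by
      rw [prod_range_succ (fun i => ((M + i).factorial : ℚ)),
        show M + M = 2*M from (two_mul M).symm]
    calc ∏ i ∈ range (M + 1),
        ((i.factorial : ℚ) * ((i + 2*M).factorial : ℚ) / (((M + i).factorial : ℚ))^2)
        = (∏ i ∈ range (M + 1), (i.factorial : ℚ))
            * (∏ i ∈ range (M + 1), ((i + 2*M).factorial : ℚ))
            / ((∏ i ∈ range (M + 1), ((M + i).factorial : ℚ))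
              * (∏ i ∈ range (M + 1), ((M + i).factorial : ℚ))) := by
          rw [← prod_mul_distrib, ← prod_mul_distrib, ← prod_div_distrib]
          apply prod_congr rfl; intro i _; ring
      _ = _ := by rw [e1, e2, e3, e3.symm.trans e4]
  rw [hT]
  have hane : a ≠ 0 := prod_ne_zero_iff.mpr fun i _ => fac_ne i
  have hbne : b ≠ 0 := prod_ne_zero_iff.mpr fun i _ => fac_ne _
  have hcne : c ≠ 0 := prod_ne_zero_iff.mpr fun i _ => fac_ne _
  have hdne : d ≠ 0 := prod_ne_zero_iff.mpr fun i _ => fac_ne _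
  constructor
  · field_simp
  · have hapos : 0 < a := prod_pos fun i _ => by positivity
    have hbpos : 0 < b := prod_pos fun i _ => by positivity
    have hcpos : 0 < c := prod_pos fun i _ => by positivity
    have hdpos : 0 < d := prod_pos fun i _ => by positivity
    positivity
end

section
/- Define P_n(X,Y) = ∑_{j=0}^{n} (-1)^j · binom(n+j, j) · binom(3n+1, n-j) · X^{2n+1+j} · Y^{n-j}. Then for every natural number n, P_n(X,Y) = X^{n+1} · ∑_{a+b=n} binom(n+a, a)·(XY)^a · binom(n+b, b)·(X(Y-X))^b, as polynomials in X and Y. -/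
/-- The polynomial `P_n(X,Y) = ∑_{j=0}^{n} (-1)^j C(n+j,j) C(3n+1,n-j) X^{2n+1+j} Y^{n-j}`. -/
def nielsenP {R : Type*} [CommRing R] (n : ℕ) (X Y : R) : R :=
  ∑ j ∈ Finset.range (n + 1),
    (-1) ^ j * (Nat.choose (n + j) j : R) * (Nat.choose (3 * n + 1) (n - j) : R)
      * X ^ (2 * n + 1 + j) * Y ^ (n - j)

open Finset

section NatLemmas

lemma hockey (r m : ℕ) :
    ∑ i ∈ range (m + 1), (r + i).choose i = (r + m + 1).choose m := by
  induction m with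
  | zero => simp
  | succ m ih =>
    rw [Finset.sum_range_succ, ih]
    show (r + m + 1).choose m + (r + m + 1).choose (m + 1) = ((r + m + 1) + 1).choose (m + 1)
    exact (Nat.choose_succ_succ' _ _).symm

lemma fId (r s m : ℕ) :
    ∑ i ∈ range (m + 1), (r + i).choose i * (s + (m - i)).choose (m - i)
      = (r + s + m + 1).choose m := by
  induction s generalizing m with
  | zero =>
    simp only [Nat.zero_add, Nat.choose_self, Nat.mul_one]
    rw [hockey]
    rfl
  | succ s ih =>
    induction m with
    | zero => simp
    | succ m ihm =>
      have key : ∀ i ∈ range (m + 1),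
          (r + i).choose i * (s + 1 + (m + 1 - i)).choose (m + 1 - i)
            = (r + i).choose i * (s + (m + 1 - i)).choose (m + 1 - i)
              + (r + i).choose i * (s + 1 + (m - i)).choose (m - i) := by
        intro i hi
        rw [mem_range] at hi
        have h1 : m + 1 - i = (m - i) + 1 := by omega
        rw [h1, show s + 1 + (m - i + 1) = (s + (m - i)) + 1 + 1 by omega,
          Nat.choose_succ_succ', show s + (m - i + 1) = s + (m - i) + 1 from rfl,
          show s + 1 + (m - i) = s + (m - i) + 1 by omega, Nat.mul_add]
        omega
      rw [Finset.sum_range_succ, Finset.sum_congr rfl key, Finset.sum_add_distrib, ihm]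
      have h2 := ih (m + 1)
      rw [Finset.sum_range_succ] at h2
      simp only [Nat.sub_self, Nat.add_zero, Nat.choose_zero_right, Nat.mul_one] at h2 ⊢
      rw [show r + s + (m + 1) + 1 = r + s + m + 2 by omega] at h2
      rw [show r + (s + 1) + m + 1 = r + s + m + 2 by omega]
      rw [show r + (s + 1) + (m + 1) + 1 = (r + s + m + 2) + 1 by omega]
      have h3 := Nat.choose_succ_succ' (r + s + m + 2) m
      omega

lemma keyNat (n k : ℕ) (hk : k ≤ n) :
    ∑ b ∈ range (n + 1), (2 * n - b).choose (n - b) * ((n + b).choose b * b.choose k)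
      = (n + k).choose k * (3 * n + 1).choose (n - k) := by
  rw [range_eq_Ico, ← Finset.sum_Ico_consecutive _ (Nat.zero_le k) (by omega : k ≤ n + 1)]
  have hzero : ∑ b ∈ Ico 0 k, (2 * n - b).choose (n - b) * ((n + b).choose b * b.choose k) = 0 := by
    apply Finset.sum_eq_zero
    intro b hb
    rw [mem_Ico] at hb
    rw [Nat.choose_eq_zero_of_lt hb.2, Nat.mul_zero, Nat.mul_zero]
  rw [hzero, Nat.zero_add, Finset.sum_Ico_eq_sum_range,
    show n + 1 - k = (n - k) + 1 by omega]
  have hterm : ∀ i ∈ range ((n - k) + 1),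
      (2 * n - (k + i)).choose (n - (k + i)) * ((n + (k + i)).choose (k + i) * (k + i).choose k)
        = (n + k).choose k * ((n + k + i).choose i * (n + ((n - k) - i)).choose ((n - k) - i)) := by
    intro i hi
    rw [mem_range] at hi
    have hs : (k + i).choose k = (k + i).choose i := by
      rw [← Nat.choose_symm (by omega : i ≤ k + i), show k + i - i = k by omega]
    have hm := Nat.choose_mul (n := n + (k + i)) (show i ≤ k + i by omega)
    rw [show n + (k + i) - i = n + k by omega, show k + i - i = k by omega,
      show n + (k + i) = n + k + i by omega] at hm
    rw [show n + (k + i) = n + k + i by omega, hs, hm,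
      show 2 * n - (k + i) = n + ((n - k) - i) by omega,
      show n - (k + i) = (n - k) - i by omega]
    ring
  rw [Finset.sum_congr rfl hterm, ← Finset.mul_sum, fId,
    show n + k + n + (n - k) + 1 = 3 * n + 1 by omega]

end NatLemmas

lemma subPow' {R : Type*} [CommRing R] (Y X : R) (b : ℕ) :
    (Y - X) ^ b = ∑ k ∈ range (b + 1), (-1) ^ k * X ^ k * Y ^ (b - k) * (b.choose k : R) := by
  rw [sub_pow]
  conv_rhs => rw [← Finset.sum_range_reflect]
  apply Finset.sum_congr rfl
  intro j hj
  rw [mem_range] at hj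
  rw [show b + 1 - 1 - j = b - j by omega, show b - (b - j) = j by omega,
    Nat.choose_symm (by omega : j ≤ b),
    show (-1 : R) ^ (b - j) = (-1) ^ (j + b) by
      rw [show j + b = (b - j) + 2 * j by omega, pow_add, pow_mul, neg_one_sq, one_pow, mul_one]]
  ring

def gAux {R : Type*} [CommRing R] (n : ℕ) (X Y : R) (b k : ℕ) : R :=
  (((2 * n - b).choose (n - b) * ((n + b).choose b * b.choose k) : ℕ) : R)
    * ((-1) ^ k * X ^ (2 * n + 1 + k) * Y ^ (n - k))


lemma hL {R : Type*} [CommRing R] (n : ℕ) (X Y : R) :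
    nielsenP n X Y = ∑ k ∈ range (n + 1), ∑ b ∈ range (n + 1), gAux n X Y b k := by
  unfold nielsenP gAux
  apply Finset.sum_congr rfl
  intro j hj
  rw [mem_range] at hj
  rw [← Finset.sum_mul, ← Nat.cast_sum, keyNat n j (by omega)]
  push_cast
  ring

lemma hR {R : Type*} [CommRing R] (n : ℕ) (X Y : R) :
    (X ^ (n + 1) *
        ∑ p ∈ Finset.HasAntidiagonal.antidiagonal n,
          (Nat.choose (n + p.1) p.1 : R) * (X * Y) ^ p.1 *
            ((Nat.choose (n + p.2) p.2 : R) * (X * (Y - X)) ^ p.2))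
      = ∑ b ∈ range (n + 1), ∑ k ∈ range (n + 1), gAux n X Y b k := by
  rw [← Finset.Nat.sum_antidiagonal_swap, Finset.Nat.sum_antidiagonal_eq_sum_range_succ_mk,
    Finset.mul_sum]
  apply Finset.sum_congr rfl
  intro b hb
  rw [mem_range] at hb
  have hb' : b ≤ n := by omega
  simp only [Prod.swap_prod_mk, Prod.fst, Prod.snd]
  have step1 : ∑ k ∈ range (b + 1), gAux n X Y b k = ∑ k ∈ range (n + 1), gAux n X Y b k := by
    apply Finset.sum_subset (Finset.range_subset_range.mpr (by omega))
    intro k _ hk'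
    rw [mem_range, not_lt] at hk'
    unfold gAux
    simp [Nat.choose_eq_zero_of_lt (show b < k by omega)]
  rw [← step1, mul_pow X (Y - X), subPow' Y X b]
  simp only [Finset.mul_sum]
  apply Finset.sum_congr rfl
  intro k hk
  rw [mem_range] at hk
  have hx : X ^ (n + 1) * (X ^ (n - b) * (X ^ b * X ^ k)) = X ^ (2 * n + 1 + k) := by
    rw [← pow_add, ← pow_add, ← pow_add]
    congr 1
    omega
  have hy : Y ^ (n - b) * Y ^ (b - k) = Y ^ (n - k) := by
    rw [← pow_add]
    congr 1
    omega
  have hxy : X ^ (n + 1) * ((X ^ (n - b) * Y ^ (n - b)) * (X ^ b * (X ^ k * Y ^ (b - k))))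
      = X ^ (2 * n + 1 + k) * Y ^ (n - k) := by
    rw [← hx, ← hy]; ring
  unfold gAux
  rw [show n + (n - b) = 2 * n - b by omega, mul_pow X Y]
  push_cast
  linear_combination (((2 * n - b).choose (n - b) : R) * ((n + b).choose b : R)
    * (b.choose k : R) * (-1 : R) ^ k) * hxy

theorem stmt10 {R : Type*} [CommRing R] (n : ℕ) (X Y : R) :
    nielsenP n X Y
      = X ^ (n + 1) *
        ∑ p ∈ Finset.HasAntidiagonal.antidiagonal n,
          (Nat.choose (n + p.1) p.1 : R) * (X * Y) ^ p.1 *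
            ((Nat.choose (n + p.2) p.2 : R) * (X * (Y - X)) ^ p.2) := by
  rw [hL, hR]
  exact Finset.sum_comm
end

section
/- Define P_n(X,Y) = ∑_{j=0}^{n} (-1)^j · binom(n+j, j) · binom(3n+1, n-j) · X^{2n+1+j} · Y^{n-j}. Then for every natural number n ≥ 0, P_n(X,Y) - P_n(Y,X) + P_n(Y-X,-X) = 0 as polynomials in X and Y. -/
set_option maxHeartbeats 1000000


namespace NielsenAux

open Polynomial PowerSeries Finset

variable {K : Type*} [Field K]

/- ### sign helpers -/

lemma neg_one_pow_mul_self (a : ℕ) : ((-1 : K) ^ a) * (-1) ^ a = 1 := by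
  rw [← pow_add, ← two_mul, pow_mul]; norm_num

lemma neg_one_pow_sub {k m : ℕ} (h : k ≤ m) :
    (-1 : K) ^ (m - k) = (-1) ^ m * (-1) ^ k := by
  have h1 : (-1 : K) ^ (m - k) * (-1) ^ k = (-1) ^ m := by
    rw [← pow_add]; congr 1; omega
  calc (-1:K)^(m-k) = (-1:K)^(m-k) * ((-1)^k * (-1)^k) := by
        rw [neg_one_pow_mul_self, mul_one]
    _ = ((-1:K)^(m-k) * (-1)^k) * (-1)^k := by ring
    _ = (-1)^m * (-1)^k := by rw [h1]

/- ### the inverse power series of `(a + b X)^(m+1)` -/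

noncomputable def invs (a b : K) (m : ℕ) : PowerSeries K :=
  PowerSeries.mk fun i => (-1)^i * (Nat.choose (m+i) i : K) * b^i * (a⁻¹)^(m+1+i)

lemma coeff_invs (a b : K) (m i : ℕ) :
    PowerSeries.coeff (R := K) i (invs a b m)
      = (-1)^i * (Nat.choose (m+i) i : K) * b^i * (a⁻¹)^(m+1+i) :=
  coeff_mk _ _

lemma mul_inv_pow_succ {a : K} (ha : a ≠ 0) (t : ℕ) : a * (a⁻¹)^(t+1) = (a⁻¹)^t := by
  rw [pow_succ]
  calc a * (a⁻¹^t * a⁻¹) = a⁻¹^t * (a * a⁻¹) := by ring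
  _ = a⁻¹^t := by rw [mul_inv_cancel₀ ha, mul_one]

lemma linear_mul_invs_zero {a : K} (b : K) (ha : a ≠ 0) :
    (PowerSeries.C (R := K) a + PowerSeries.C (R := K) b * PowerSeries.X) * invs a b 0 = 1 := by
  ext k
  rw [add_mul, mul_assoc, map_add, PowerSeries.coeff_C_mul, PowerSeries.coeff_C_mul]
  cases k with
  | zero =>
      simp [coeff_invs, PowerSeries.coeff_zero_X_mul, mul_inv_cancel₀ ha]
  | succ k =>
      rw [PowerSeries.coeff_succ_X_mul, coeff_invs, coeff_invs, PowerSeries.coeff_one]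
      simp only [Nat.zero_add, Nat.choose_self]
      rw [if_neg (Nat.succ_ne_zero k)]
      have h1 : (1:ℕ) + (k+1) = (1+k) + 1 := by omega
      rw [h1, pow_succ a⁻¹ (1+k)]
      push_cast
      linear_combination ((-1:K)^(k+1) * b^(k+1) * a⁻¹^(1+k)) * mul_inv_cancel₀ ha

lemma linear_mul_invs_succ {a : K} (b : K) (ha : a ≠ 0) (m : ℕ) :
    (PowerSeries.C (R := K) a + PowerSeries.C (R := K) b * PowerSeries.X) * invs a b (m+1) = invs a b m := by
  ext k
  rw [add_mul, mul_assoc, map_add, PowerSeries.coeff_C_mul, PowerSeries.coeff_C_mul]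
  cases k with
  | zero =>
      rw [PowerSeries.coeff_zero_X_mul, coeff_invs, coeff_invs]
      simp only [pow_zero, Nat.add_zero, Nat.choose_zero_right, Nat.cast_one, one_mul,
        mul_one, mul_zero, add_zero]
      exact mul_inv_pow_succ ha (m+1)
  | succ k =>
      rw [PowerSeries.coeff_succ_X_mul, coeff_invs, coeff_invs, coeff_invs]
      have hP : (m+1+(k+1)).choose (k+1) = (m+1+k).choose k + (m+(k+1)).choose (k+1) := by
        rw [show m+1+(k+1) = (m+k+1)+1 from by omega, Nat.choose_succ_succ,
          show m+1+k = m+k+1 from by omega, show m+(k+1) = m+k+1 from by omega]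
      have he1 : (a⁻¹ : K)^(m+1+1+(k+1)) = a⁻¹^(m+1+(k+1)) * a⁻¹ := by
        rw [← pow_succ]; congr 1; omega
      have he2 : (a⁻¹ : K)^(m+1+1+k) = a⁻¹^(m+1+(k+1)) := by congr 1; omega
      rw [he1, he2, hP]
      push_cast
      linear_combination ((-1:K)^(k+1) * (((m+1+k).choose k : K) + ((m+(k+1)).choose (k+1) : K))
        * b^(k+1) * a⁻¹^(m+1+(k+1))) * mul_inv_cancel₀ ha

lemma pow_linear_mul_invs {a : K} (b : K) (ha : a ≠ 0) (m : ℕ) :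
    (PowerSeries.C (R := K) a + PowerSeries.C (R := K) b * PowerSeries.X)^(m+1) * invs a b m = 1 := by
  induction m with
  | zero => rw [pow_one]; exact linear_mul_invs_zero b ha
  | succ m ih => rw [pow_succ, mul_assoc, linear_mul_invs_succ b ha m, ih]

/- ### generic coefficient helpers -/

lemma coeff_coe_mul (p : K[X]) (φ : K⟦X⟧) (N : ℕ) :
    PowerSeries.coeff (R := K) N ((p : K⟦X⟧) * φ)
      = ∑ k ∈ range (N+1), p.coeff k * PowerSeries.coeff (R := K) (N-k) φ := by
  rw [PowerSeries.coeff_mul]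
  simp_rw [Polynomial.coeff_coe]
  exact Finset.Nat.sum_antidiagonal_eq_sum_range_succ
    (fun i j => p.coeff i * PowerSeries.coeff (R := K) j φ) N

lemma natDegree_reflect_le (p : K[X]) {N : ℕ} (h : p.natDegree ≤ N) :
    (reflect N p).natDegree ≤ N := by
  refine natDegree_le_iff_coeff_eq_zero.mpr fun m hm => ?_
  rw [coeff_reflect, revAt_eq_self_of_lt hm]
  exact coeff_eq_zero_of_natDegree_lt (lt_of_le_of_lt h hm)

lemma reflect_reflect (p : K[X]) (N : ℕ) : reflect N (reflect N p) = p := by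
  ext i; rw [coeff_reflect, coeff_reflect, revAt_invol]

lemma reflect_shift (p : K[X]) {M N : ℕ} (h : p.natDegree ≤ M) (hMN : M ≤ N) :
    reflect N p = Polynomial.X ^ (N - M) * reflect M p := by
  ext i
  rw [coeff_reflect, Polynomial.coeff_X_pow_mul']
  split_ifs with hi
  · rw [coeff_reflect]
    by_cases hiN : i ≤ N
    · rw [revAt_le hiN, revAt_le (by omega : i - (N-M) ≤ M)]
      congr 1; omega
    · rw [revAt_eq_self_of_lt (by omega), revAt_eq_self_of_lt (by omega)]
      rw [coeff_eq_zero_of_natDegree_lt (by omega), coeff_eq_zero_of_natDegree_lt (by omega)]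
  · rw [revAt_le (by omega : i ≤ N)]
    exact coeff_eq_zero_of_natDegree_lt (by omega)

lemma natDegree_one_add_le (c : K) : (1 + Polynomial.C c * Polynomial.X).natDegree ≤ 1 := by
  apply (natDegree_add_le _ _).trans
  simp only [natDegree_one]
  exact max_le (by omega) ((natDegree_C_mul_le _ _).trans natDegree_X_le)

lemma natDegree_one_add_pow_le (c : K) (k : ℕ) :
    ((1 + Polynomial.C c * Polynomial.X)^k).natDegree ≤ k := by
  refine natDegree_pow_le.trans ?_
  have := natDegree_one_add_le c
  calc k * (1 + Polynomial.C c * Polynomial.X).natDegree ≤ k * 1 :=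
        Nat.mul_le_mul_left k this
    _ = k := by omega

lemma reflect_one_add_linear (c : K) :
    reflect 1 (1 + Polynomial.C c * Polynomial.X) = Polynomial.X + Polynomial.C c := by
  rw [reflect_add, ← Polynomial.C_1, reflect_C, pow_one, ← pow_one Polynomial.X,
    reflect_C_mul_X_pow]
  rw [revAt_le (le_refl 1)]
  simp

lemma reflect_pow_linear (c : K) (k : ℕ) :
    reflect k ((1 + Polynomial.C c * Polynomial.X)^k)
      = (Polynomial.X + Polynomial.C c)^k := by
  induction k with
  | zero => rw [pow_zero, pow_zero, ← Polynomial.C_1, reflect_C, pow_zero, mul_one]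
  | succ k ih =>
      rw [pow_succ, pow_succ,
        reflect_mul _ _ (natDegree_one_add_pow_le c k) (natDegree_one_add_le c), ih,
        reflect_one_add_linear]

/- ### the specific polynomials -/

noncomputable def F2 (n : ℕ) (x y : K) : K[X] :=
  Polynomial.C (x^(2*n+1)) * (Polynomial.X + Polynomial.C y)^(3*n+1)

lemma natDegree_F2_le (n : ℕ) (x y : K) : (F2 n x y).natDegree ≤ 3*n+1 := by
  apply natDegree_mul_le.trans
  simp only [natDegree_C, zero_add]
  exact natDegree_pow_le.trans (by simp)

lemma coeff_F2 (n : ℕ) (x y : K) (k : ℕ) :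
    (F2 n x y).coeff k = x^(2*n+1) * (y^(3*n+1-k) * ((3*n+1).choose k : K)) := by
  rw [F2, Polynomial.coeff_C_mul, coeff_X_add_C_pow]

noncomputable def Fp (n : ℕ) (x y : K) : K[X] := (F2 n x y).reflect (3*n+1)

lemma coeff_Fp (n : ℕ) (x y : K) {k : ℕ} (hk : k ≤ 3*n+1) :
    (Fp n x y).coeff k = x^(2*n+1) * (y^k * ((3*n+1).choose k : K)) := by
  rw [Fp, coeff_reflect, revAt_le hk, coeff_F2]
  rw [show 3*n+1-(3*n+1-k) = k from by omega, Nat.choose_symm hk]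

lemma natDegree_Fp_le (n : ℕ) (x y : K) : (Fp n x y).natDegree ≤ 3*n+1 :=
  natDegree_reflect_le _ (natDegree_F2_le n x y)

lemma reflect_Fp (n : ℕ) (x y : K) : (Fp n x y).reflect (3*n+1) = F2 n x y :=
  reflect_reflect _ _

noncomputable def Gp (n : ℕ) (x : K) : K[X] := (1 + Polynomial.C x * Polynomial.X)^(n+1)

lemma natDegree_Gp_le (n : ℕ) (x : K) : (Gp n x).natDegree ≤ n+1 :=
  natDegree_one_add_pow_le x (n+1)

lemma coe_Gp_mul_S (n : ℕ) (x : K) : ((Gp n x : K[X]) : K⟦X⟧) * invs 1 x n = 1 := by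
  have h := pow_linear_mul_invs (a := (1:K)) x one_ne_zero n
  rw [map_one] at h
  rw [← h]
  congr 1
  rw [Gp, Polynomial.coe_pow, Polynomial.coe_add, Polynomial.coe_one, Polynomial.coe_mul,
    Polynomial.coe_C, Polynomial.coe_X]

lemma coe_XC_mul_D (n : ℕ) {x : K} (hx : x ≠ 0) :
    (((Polynomial.X + Polynomial.C x)^(n+1) : K[X]) : K⟦X⟧) * invs x 1 n = 1 := by
  have h := pow_linear_mul_invs (a := x) 1 hx n
  rw [map_one, one_mul, add_comm] at h
  rw [← h]
  congr 1
  rw [Polynomial.coe_pow, Polynomial.coe_add, Polynomial.coe_C, Polynomial.coe_X]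

lemma coe_XC_mul_D' (n : ℕ) {x : K} (hx : x ≠ 0) :
    (((Polynomial.X - Polynomial.C x)^(n+1) : K[X]) : K⟦X⟧) * invs (-x) 1 n = 1 := by
  have h := pow_linear_mul_invs (a := (-x : K)) 1 (neg_ne_zero.mpr hx) n
  rw [map_one, one_mul, map_neg, add_comm, ← sub_eq_add_neg] at h
  rw [← h]
  congr 1
  rw [Polynomial.coe_pow, Polynomial.coe_sub, Polynomial.coe_C, Polynomial.coe_X]

noncomputable def Ap (n : ℕ) (x y : K) : K[X] :=
  trunc (n+1) ((Fp n x y : K⟦X⟧) * invs 1 x n)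

lemma natDegree_Ap_le (n : ℕ) (x y : K) : (Ap n x y).natDegree ≤ n :=
  Nat.lt_succ_iff.mp (natDegree_trunc_lt _ n)

lemma coeff_Ap_n (n : ℕ) (x y : K) : (Ap n x y).coeff n = nielsenP n x y := by
  rw [Ap, coeff_trunc, if_pos (Nat.lt_succ_self n)]
  rw [coeff_coe_mul, nielsenP,
    ← Finset.sum_range_reflect
      (fun k => (Fp n x y).coeff k * PowerSeries.coeff (R := K) (n-k) (invs 1 x n)) (n+1)]
  apply Finset.sum_congr rfl
  intro j hj
  have hj' : j ≤ n := Nat.lt_succ_iff.mp (mem_range.mp hj)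
  rw [show n+1-1-j = n-j from by omega]
  rw [coeff_Fp _ _ _ (by omega : n-j ≤ 3*n+1), coeff_invs,
    show n-(n-j) = j from by omega, inv_one, one_pow]
  ring

lemma exists_B (n : ℕ) (x y : K) :
    ∃ B : K[X], Fp n x y = Ap n x y * Gp n x + Polynomial.X^(n+1) * B
      ∧ B.natDegree ≤ 2*n := by
  have hcoeff : ∀ d, d < n+1 → (Fp n x y - Ap n x y * Gp n x).coeff d = 0 := by
    intro d hd
    rw [coeff_sub]
    have h1 : (Ap n x y * Gp n x).coeff d
        = PowerSeries.coeff (R := K) d (((Fp n x y : K⟦X⟧) * invs 1 x n) * (Gp n x : K⟦X⟧)) := by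
      rw [← Polynomial.coeff_coe, Polynomial.coe_mul,
        PowerSeries.coeff_mul, PowerSeries.coeff_mul]
      apply Finset.sum_congr rfl
      rintro ⟨i, j⟩ hij
      have hi : i ≤ d := by
        have := Finset.HasAntidiagonal.mem_antidiagonal.mp hij
        omega
      congr 1
      rw [Polynomial.coeff_coe, Ap, coeff_trunc, if_pos (by omega)]
    rw [h1, mul_assoc, mul_comm (invs 1 x n), coe_Gp_mul_S, mul_one,
      Polynomial.coeff_coe, sub_self]
  obtain ⟨B, hB⟩ := (Polynomial.X_pow_dvd_iff).mpr hcoeff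
  refine ⟨B, by rw [← hB]; ring, ?_⟩
  by_cases hB0 : B = 0
  · simp [hB0]
  · have hd : (Polynomial.X^(n+1) * B).natDegree = (n+1) + B.natDegree := by
      rw [natDegree_mul (pow_ne_zero _ Polynomial.X_ne_zero) hB0, natDegree_X_pow]
    have hle : (Fp n x y - Ap n x y * Gp n x).natDegree ≤ 3*n+1 := by
      apply (natDegree_sub_le _ _).trans
      apply max_le (natDegree_Fp_le n x y)
      apply natDegree_mul_le.trans
      have h2 := natDegree_Ap_le n x y
      have h3 := natDegree_Gp_le n x
      omega
    rw [hB, hd] at hle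
    omega

/- ### the auxiliary Vandermonde-type identity -/

lemma coe_one_sub_X_pow (r : ℕ) :
    (((1 - Polynomial.X : K[X])^r : K[X]) : K⟦X⟧) = (1 - PowerSeries.X)^r := by
  rw [Polynomial.coe_pow, Polynomial.coe_sub, Polynomial.coe_one, Polynomial.coe_X]

lemma coeff_one_sub_X_pow (r k : ℕ) :
    ((1 - Polynomial.X : K[X])^r).coeff k = (-1:K)^k * (r.choose k : K) := by
  have h1 : (1 - Polynomial.X : K[X]) = Polynomial.C (-1:K) * (Polynomial.X + Polynomial.C (-1)) := by
    rw [map_neg, Polynomial.C_1]; ring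
  rw [h1, mul_pow, ← Polynomial.C_pow, Polynomial.coeff_C_mul, coeff_X_add_C_pow]
  by_cases hkr : k ≤ r
  · rw [neg_one_pow_sub hkr,
      show ((-1:K)^r * ((-1:K)^r * (-1:K)^k * (r.choose k : K)))
        = ((-1:K)^r * (-1:K)^r) * ((-1:K)^k * (r.choose k : K)) from by ring,
      neg_one_pow_mul_self, one_mul]
  · rw [Nat.choose_eq_zero_of_lt (by omega)]
    simp

lemma one_sub_X_ne_zero : (1 - PowerSeries.X : K⟦X⟧) ≠ 0 := by
  intro h0
  have h := congrArg (PowerSeries.constantCoeff (R := K)) h0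
  simp at h

lemma hJ (n : ℕ) : ((1 - PowerSeries.X : K⟦X⟧))^(n+1) * invs 1 (-1) n = 1 := by
  have h := pow_linear_mul_invs (a := (1:K)) (-1) one_ne_zero n
  rw [map_one, map_neg, map_one] at h
  have h2 : (1 - PowerSeries.X : K⟦X⟧) = 1 + -1 * PowerSeries.X := by ring
  rw [h2]
  exact h

lemma Eid (n m : ℕ) (hm : m ≤ 2*n) :
    ∑ k ∈ range (n+1), (-1:K)^k * (m.choose k : K) * ((2*n-k).choose (n-k) : K)
      = if m ≤ n then ((2*n-m).choose n : K) else 0 := by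
  have key : PowerSeries.coeff (R := K) n ((((1 - Polynomial.X : K[X])^m : K[X]) : K⟦X⟧) * invs 1 (-1) n)
      = ∑ k ∈ range (n+1), (-1:K)^k * (m.choose k : K) * ((2*n-k).choose (n-k) : K) := by
    rw [coeff_coe_mul]
    apply Finset.sum_congr rfl
    intro k hk
    have hk' : k ≤ n := Nat.lt_succ_iff.mp (mem_range.mp hk)
    rw [coeff_one_sub_X_pow, coeff_invs, inv_one, one_pow,
      show n+(n-k) = 2*n-k from by omega,
      show ((-1:K)^(n-k) * (((2*n-k).choose (n-k) : K)) * (-1:K)^(n-k) * 1)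
        = ((-1:K)^(n-k) * (-1:K)^(n-k)) * (((2*n-k).choose (n-k)) : K) from by ring,
      neg_one_pow_mul_self, one_mul]
  rw [← key]
  split_ifs with hmn
  · have hfac : (((1 - Polynomial.X : K[X])^m : K[X]) : K⟦X⟧) * invs 1 (-1) n
        = invs 1 (-1) (n - m) := by
      apply mul_left_cancel₀ (pow_ne_zero (n+1-m) (one_sub_X_ne_zero (K := K)))
      rw [coe_one_sub_X_pow]
      calc (1 - PowerSeries.X : K⟦X⟧)^(n+1-m) * ((1 - PowerSeries.X)^m * invs 1 (-1) n)
          = (1 - PowerSeries.X)^(n+1) * invs 1 (-1) n := by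
            rw [← mul_assoc, ← pow_add, show n+1-m+m = n+1 from by omega]
        _ = 1 := hJ n
        _ = (1 - PowerSeries.X : K⟦X⟧)^(n+1-m) * invs 1 (-1) (n-m) := by
            have h2 := hJ (K := K) (n - m)
            rw [show n-m+1 = n+1-m from by omega] at h2
            rw [h2]
    rw [hfac, coeff_invs, inv_one, one_pow, show n-m+n = 2*n-m from by omega,
      show ((-1:K)^n * (((2*n-m).choose n : K)) * (-1:K)^n * 1)
        = ((-1:K)^n * (-1:K)^n) * (((2*n-m).choose n) : K) from by ring,
      neg_one_pow_mul_self, one_mul]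
  · have hfac : (((1 - Polynomial.X : K[X])^m : K[X]) : K⟦X⟧) * invs 1 (-1) n
        = (((1 - Polynomial.X : K[X])^(m-n-1) : K[X]) : K⟦X⟧) := by
      rw [coe_one_sub_X_pow, coe_one_sub_X_pow,
        show (1 - PowerSeries.X : K⟦X⟧)^m = (1 - PowerSeries.X)^(m-n-1) * (1 - PowerSeries.X)^(n+1) from by
          rw [← pow_add]; congr 1; omega,
        mul_assoc, hJ, mul_one]
    rw [hfac, Polynomial.coeff_coe, coeff_one_sub_X_pow,
      Nat.choose_eq_zero_of_lt (by omega : m-n-1 < n)]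
    simp

/- ### the three coefficient extractions -/

lemma coeff_F2_mul_D (n : ℕ) {x : K} (hx : x ≠ 0) (y : K) :
    PowerSeries.coeff (R := K) n ((F2 n x y : K⟦X⟧) * invs x 1 n) = nielsenP n y x := by
  rw [coeff_coe_mul, nielsenP,
    ← Finset.sum_range_reflect
      (fun k => (F2 n x y).coeff k * PowerSeries.coeff (R := K) (n-k) (invs x 1 n)) (n+1)]
  apply Finset.sum_congr rfl
  intro j hj
  have hj' : j ≤ n := Nat.lt_succ_iff.mp (mem_range.mp hj)
  rw [show n+1-1-j = n-j from by omega, coeff_F2, coeff_invs,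
    show n-(n-j) = j from by omega, one_pow,
    show 3*n+1-(n-j) = 2*n+1+j from by omega]
  have hxp : x^(2*n+1) * (x⁻¹)^(n+1+j) = x^(n-j) := by
    rw [inv_pow, ← pow_sub₀ x hx (by omega : n+1+j ≤ 2*n+1)]
    congr 1; omega
  rw [← hxp]
  ring

lemma coeff_F3_mul_D' (n : ℕ) {x : K} (hx : x ≠ 0) (y : K) :
    PowerSeries.coeff (R := K) n ((F2 n x (y-x) : K⟦X⟧) * invs (-x) 1 n)
      = - nielsenP n (y-x) (-x) := by
  rw [coeff_coe_mul, nielsenP,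
    ← Finset.sum_range_reflect
      (fun k => (F2 n x (y-x)).coeff k * PowerSeries.coeff (R := K) (n-k) (invs (-x) 1 n)) (n+1),
    ← Finset.sum_neg_distrib]
  apply Finset.sum_congr rfl
  intro j hj
  have hj' : j ≤ n := Nat.lt_succ_iff.mp (mem_range.mp hj)
  rw [show n+1-1-j = n-j from by omega, coeff_F2, coeff_invs,
    show n-(n-j) = j from by omega, one_pow,
    show 3*n+1-(n-j) = 2*n+1+j from by omega]
  have hodd : Odd (2*n+1) := odd_two_mul_add_one n
  have h1 : x^(2*n+1) = -((-x)^(2*n+1)) := by rw [hodd.neg_pow x, neg_neg]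
  have h2 : ((-x) : K)^(2*n+1) * ((-x)⁻¹)^(n+1+j) = (-x)^(n-j) := by
    rw [inv_pow, ← pow_sub₀ (-x) (neg_ne_zero.mpr hx) (by omega : n+1+j ≤ 2*n+1)]
    congr 1; omega
  have h3 : ((-x) : K)^(n-j) = -(x^(2*n+1) * ((-x)⁻¹)^(n+1+j)) := by
    rw [h1, neg_mul, neg_neg, h2]
  rw [h3]
  ring

/- ### step E : the sign-flip under recentring -/

lemma core_m (n : ℕ) {x : K} (hx : x ≠ 0) {m : ℕ} (hm : m ≤ 2*n) :
    PowerSeries.coeff (R := K) n ((((Polynomial.X - Polynomial.C x)^m : K[X]) : K⟦X⟧) * invs (-x) 1 n)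
      = - PowerSeries.coeff (R := K) n (((Polynomial.X^m : K[X]) : K⟦X⟧) * invs x 1 n) := by
  have hR : PowerSeries.coeff (R := K) n (((Polynomial.X^m : K[X]) : K⟦X⟧) * invs x 1 n)
      = if m ≤ n then (-1:K)^(n-m) * (((2*n-m).choose (n-m)) : K) * (x⁻¹)^(2*n+1-m) else 0 := by
    rw [Polynomial.coe_pow, Polynomial.coe_X, PowerSeries.coeff_X_pow_mul']
    split_ifs with h
    · rw [coeff_invs, one_pow,
        show n+(n-m) = 2*n-m from by omega, show n+1+(n-m) = 2*n+1-m from by omega]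
      ring
    · rfl
  have hL : PowerSeries.coeff (R := K) n ((((Polynomial.X - Polynomial.C x)^m : K[X]) : K⟦X⟧) * invs (-x) 1 n)
      = ((-x)⁻¹)^(2*n+1-m) * ((-1:K)^n *
          ∑ k ∈ range (n+1), (-1:K)^k * (m.choose k : K) * ((2*n-k).choose (n-k) : K)) := by
    rw [coeff_coe_mul, Finset.mul_sum, Finset.mul_sum]
    apply Finset.sum_congr rfl
    intro k hk
    have hk' : k ≤ n := Nat.lt_succ_iff.mp (mem_range.mp hk)
    rw [show (Polynomial.X - Polynomial.C x : K[X]) = Polynomial.X + Polynomial.C (-x) from by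
        rw [map_neg]; ring,
      coeff_X_add_C_pow, coeff_invs, one_pow,
      show n+(n-k) = 2*n-k from by omega, show n+1+(n-k) = 2*n+1-k from by omega]
    by_cases hkm : k ≤ m
    · have hsplit : ((-x)⁻¹ : K)^(2*n+1-k) = ((-x)⁻¹)^(m-k) * ((-x)⁻¹)^(2*n+1-m) := by
        rw [← pow_add]; congr 1; omega
      have hcanc : ((-x) : K)^(m-k) * ((-x)⁻¹)^(m-k) = 1 := by
        rw [← mul_pow, mul_inv_cancel₀ (neg_ne_zero.mpr hx), one_pow]
      rw [hsplit, neg_one_pow_sub hk']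
      linear_combination (((m.choose k : K)) * ((-1:K)^n * (-1:K)^k
        * (((2*n-k).choose (n-k)) : K)) * ((-x)⁻¹)^(2*n+1-m)) * hcanc
    · rw [Nat.choose_eq_zero_of_lt (by omega)]
      simp
  rw [hL, Eid n m hm, hR]
  split_ifs with hmn
  · have hA : ((-x)⁻¹ : K)^(2*n+1-m) = (-1)^(2*n+1-m) * (x⁻¹)^(2*n+1-m) := by
      rw [inv_neg, neg_pow]
    have hs1 : (-1:K)^(2*n+1-m) = (-1)^(2*n+1) * (-1)^m := neg_one_pow_sub (by omega)
    have hs2 : (-1:K)^(n-m) = (-1)^n * (-1)^m := neg_one_pow_sub hmn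
    have hs3 : (-1:K)^(2*n+1) = -1 := Odd.neg_one_pow (odd_two_mul_add_one n)
    have hch : ((2*n-m).choose n : K) = ((2*n-m).choose (n-m) : K) := by
      have h := Nat.choose_symm (show n ≤ 2*n-m by omega)
      rw [show 2*n-m-n = n-m from by omega] at h
      exact congrArg (Nat.cast : ℕ → K) h.symm
    rw [hA, hs1, hs2, hs3, hch]
    ring
  · simp

lemma stepE (n : ℕ) {x : K} (hx : x ≠ 0) (q : K[X]) (hq : q.natDegree ≤ 2*n) :
    PowerSeries.coeff (R := K) n ((↑(q.comp (Polynomial.X - Polynomial.C x)) : K⟦X⟧) * invs (-x) 1 n)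
      = - PowerSeries.coeff (R := K) n ((↑q : K⟦X⟧) * invs x 1 n) := by
  conv_lhs => rw [Polynomial.as_sum_range' q (2*n+1) (by omega)]
  conv_rhs => rw [Polynomial.as_sum_range' q (2*n+1) (by omega)]
  rw [Polynomial.sum_comp]
  simp only [Polynomial.monomial_comp]
  rw [← Polynomial.coeToPowerSeries.ringHom_apply, map_sum,
    ← Polynomial.coeToPowerSeries.ringHom_apply (R := K), map_sum,
    Finset.sum_mul, Finset.sum_mul, map_sum, map_sum, ← Finset.sum_neg_distrib]
  apply Finset.sum_congr rfl
  intro i hi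
  have hi' : i ≤ 2*n := Nat.lt_succ_iff.mp (mem_range.mp hi)
  rw [Polynomial.coeToPowerSeries.ringHom_apply, Polynomial.coeToPowerSeries.ringHom_apply,
    ← Polynomial.C_mul_X_pow_eq_monomial,
    Polynomial.coe_mul, Polynomial.coe_mul,
    mul_assoc, mul_assoc, Polynomial.coe_C,
    PowerSeries.coeff_C_mul, PowerSeries.coeff_C_mul,
    core_m n hx hi']
  ring

/- ### main identity over a field -/

theorem key (n : ℕ) (x y : K) (hx : x ≠ 0) :
    nielsenP n x y - nielsenP n y x + nielsenP n (y - x) (-x) = 0 := by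
  obtain ⟨B, hB, hBdeg⟩ := exists_B n x y
  set Ah : K[X] := (Ap n x y).reflect n with hAh
  set Bh : K[X] := B.reflect (2*n) with hBh
  have hBh_deg : Bh.natDegree ≤ 2*n := natDegree_reflect_le _ hBdeg
  -- the reflected decomposition
  have hstar : F2 n x y
      = Polynomial.X^n * (Ah * (Polynomial.X + Polynomial.C x)^(n+1)) + Bh := by
    have h := congrArg (fun p : K[X] => p.reflect (3*n+1)) hB
    rw [reflect_Fp, reflect_add] at h
    have hAG : (Ap n x y * Gp n x).reflect (3*n+1)
        = Polynomial.X^n * (Ah * (Polynomial.X + Polynomial.C x)^(n+1)) := by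
      have hdeg : (Ap n x y * Gp n x).natDegree ≤ 2*n+1 := by
        apply natDegree_mul_le.trans
        have h1 := natDegree_Ap_le n x y
        have h2 := natDegree_Gp_le n x
        omega
      rw [reflect_shift _ hdeg (by omega : 2*n+1 ≤ 3*n+1),
        show 3*n+1-(2*n+1) = n from by omega,
        show 2*n+1 = n + (n+1) from by omega,
        reflect_mul _ _ (natDegree_Ap_le n x y) (natDegree_Gp_le n x),
        Gp, reflect_pow_linear]
    have hXB : (Polynomial.X^(n+1) * B).reflect (3*n+1) = Bh := by
      rw [show 3*n+1 = (n+1) + 2*n from by omega,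
        reflect_mul _ _ (natDegree_X_pow (R := K) (n+1)).le hBdeg,
        reflect_monomial, revAt_le (le_refl (n+1)), Nat.sub_self, pow_zero, one_mul]
    rw [hAG, hXB] at h
    exact h
  have hD := coe_XC_mul_D n hx
  have hD' := coe_XC_mul_D' n hx
  -- first coefficient identity
  have e1 : nielsenP n y x
      = nielsenP n x y + PowerSeries.coeff (R := K) n ((Bh : K⟦X⟧) * invs x 1 n) := by
    have h0 : ((F2 n x y : K[X]) : K⟦X⟧) * invs x 1 n
        = PowerSeries.X^n * (Ah : K⟦X⟧) + (Bh : K⟦X⟧) * invs x 1 n := by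
      rw [hstar, Polynomial.coe_add, Polynomial.coe_mul, Polynomial.coe_mul,
        Polynomial.coe_pow, Polynomial.coe_X, add_mul]
      congr 1
      calc (PowerSeries.X^n * ((Ah : K⟦X⟧)
              * (((Polynomial.X + Polynomial.C x)^(n+1) : K[X]) : K⟦X⟧))) * invs x 1 n
          = PowerSeries.X^n * (Ah : K⟦X⟧)
              * ((((Polynomial.X + Polynomial.C x)^(n+1) : K[X]) : K⟦X⟧) * invs x 1 n) := by
            ring
        _ = PowerSeries.X^n * (Ah : K⟦X⟧) := by rw [hD, mul_one]
    have h1 := congrArg (PowerSeries.coeff (R := K) n) h0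
    rw [coeff_F2_mul_D n hx y, map_add, PowerSeries.coeff_X_pow_mul',
      if_pos (le_refl n), Nat.sub_self, Polynomial.coeff_coe] at h1
    have hA0 : Ah.coeff 0 = nielsenP n x y := by
      rw [hAh, coeff_reflect, revAt_le (Nat.zero_le n), Nat.sub_zero, coeff_Ap_n]
    rw [hA0] at h1
    exact h1
  -- the composed decomposition
  have hcomp : F2 n x (y-x)
      = (Polynomial.X - Polynomial.C x)^n
          * ((Ah.comp (Polynomial.X - Polynomial.C x)) * Polynomial.X^(n+1))
        + Bh.comp (Polynomial.X - Polynomial.C x) := by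
    have h := congrArg (fun p : K[X] => p.comp (Polynomial.X - Polynomial.C x)) hstar
    simp only [F2, Polynomial.add_comp, Polynomial.mul_comp, Polynomial.pow_comp,
      Polynomial.X_comp, Polynomial.C_comp] at h
    rw [show (Polynomial.X - Polynomial.C x + Polynomial.C y : K[X])
          = Polynomial.X + Polynomial.C (y - x) from by rw [map_sub]; ring,
      show (Polynomial.X - Polynomial.C x + Polynomial.C x : K[X])
          = Polynomial.X from by ring] at h
    rw [F2]
    exact h
  -- second coefficient identity
  have e2 : - nielsenP n (y-x) (-x)
      = - PowerSeries.coeff (R := K) n ((Bh : K⟦X⟧) * invs x 1 n) := by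
    have h0 : ((F2 n x (y-x) : K[X]) : K⟦X⟧) * invs (-x) 1 n
        = PowerSeries.X^(n+1) * ((((Polynomial.X - Polynomial.C x)^n : K[X]) : K⟦X⟧)
            * ((Ah.comp (Polynomial.X - Polynomial.C x) : K[X]) : K⟦X⟧) * invs (-x) 1 n)
          + ((Bh.comp (Polynomial.X - Polynomial.C x) : K[X]) : K⟦X⟧) * invs (-x) 1 n := by
      rw [hcomp]
      simp only [Polynomial.coe_add, Polynomial.coe_mul, Polynomial.coe_pow, Polynomial.coe_X]
      ring
    have h1 := congrArg (PowerSeries.coeff (R := K) n) h0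
    rw [coeff_F3_mul_D' n hx y, map_add, PowerSeries.coeff_X_pow_mul',
      if_neg (by omega : ¬ (n+1 ≤ n)), zero_add,
      stepE n hx Bh hBh_deg] at h1
    exact h1
  linear_combination -e1 - e2

end NielsenAux

/- ### transfer to arbitrary commutative rings -/

lemma map_nielsenP {R S : Type*} [CommRing R] [CommRing S] (f : R →+* S) (n : ℕ) (a b : R) :
    f (nielsenP n a b) = nielsenP n (f a) (f b) := by
  simp only [nielsenP, map_sum, map_mul, map_pow, map_neg, map_one, map_natCast]

theorem stmt11 {R : Type*} [CommRing R] (n : ℕ) (X Y : R) :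
    nielsenP n X Y - nielsenP n Y X + nielsenP n (Y - X) (-X) = 0 := by
  classical
  have key2 : (nielsenP n (MvPolynomial.X 0) (MvPolynomial.X 1)
      - nielsenP n (MvPolynomial.X 1) (MvPolynomial.X 0)
      + nielsenP n (MvPolynomial.X 1 - MvPolynomial.X 0) (-(MvPolynomial.X 0))
      : MvPolynomial (Fin 2) ℤ) = 0 := by
    have hinj := IsFractionRing.injective (MvPolynomial (Fin 2) ℤ)
      (FractionRing (MvPolynomial (Fin 2) ℤ))
    apply hinj
    set φ := algebraMap (MvPolynomial (Fin 2) ℤ) (FractionRing (MvPolynomial (Fin 2) ℤ))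
    have hx0 : φ (MvPolynomial.X 0) ≠ 0 := by
      rw [Ne, map_eq_zero_iff φ hinj]
      exact MvPolynomial.X_ne_zero 0
    have hk := NielsenAux.key n (φ (MvPolynomial.X 0)) (φ (MvPolynomial.X 1)) hx0
    rw [map_add, map_sub, map_nielsenP, map_nielsenP, map_nielsenP, map_sub, map_neg, map_zero]
    exact hk
  have hspec := congrArg
    (fun p => MvPolynomial.eval₂Hom (Int.castRingHom R) (fun i : Fin 2 => if i = 0 then X else Y) p)
    key2
  simp only [map_add, map_sub, map_neg, map_zero, map_nielsenP,
    MvPolynomial.eval₂Hom_X'] at hspec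
  norm_num at hspec
  convert hspec using 2
end

section
/- For real x, y with |x| + |y| < 1, the dilogarithm Li_2 satisfies the five-term relation: Li_2(x) + Li_2(y) - Li_2(x/(1-y)) - Li_2(y/(1-x)) + Li_2(xy/((1-x)(1-y))) = -log(1-x)·log(1-y). -/
/-- The dilogarithm `Li_2(x) = ∑_{k ≥ 1} x^k / k^2` for `|x| < 1`. -/
noncomputable def Li2 (x : ℝ) : ℝ :=
  ∑' k : ℕ, x ^ (k + 1) / ((k + 1 : ℕ) : ℝ) ^ 2

open Real Filter Set

lemma Li2_zero : Li2 0 = 0 := by simp [Li2]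

lemma Li2_hasDerivAt {t : ℝ} (ht : |t| < 1) :
    HasDerivAt Li2 (∑' k : ℕ, t ^ k / ((k + 1 : ℕ) : ℝ)) t := by
  set r : ℝ := (|t| + 1) / 2 with hr
  have hr0 : 0 ≤ r := by positivity
  have hrt : |t| < r := by simp only [hr]; linarith
  have hr1 : r < 1 := by simp only [hr]; linarith
  have := hasDerivAt_tsum_of_isPreconnected (u := fun n : ℕ => r ^ n)
    (g := fun (n : ℕ) (z : ℝ) => z ^ (n + 1) / ((n + 1 : ℕ) : ℝ) ^ 2)
    (g' := fun (n : ℕ) (z : ℝ) => z ^ n / ((n + 1 : ℕ) : ℝ))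
    (summable_geometric_of_lt_one hr0 hr1) (Metric.isOpen_ball (x := (0:ℝ)) (ε := r))
    (convex_ball (0:ℝ) r).isPreconnected
    (fun n z _ => by
      have h1 : ((n:ℝ) + 1) ≠ 0 := by positivity
      have := (hasDerivAt_pow (n + 1) z).div_const (((n + 1 : ℕ) : ℝ) ^ 2)
      convert this using 1
      · rfl
      rw [Nat.add_sub_cancel]
      push_cast
      field_simp)
    (fun n z hz => by
      have hz' : |z| < r := by simpa [Real.dist_eq] using hz
      have h1 : (1:ℝ) ≤ (n:ℝ) + 1 := by
        have := Nat.cast_nonneg (α := ℝ) n; linarith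
      rw [Real.norm_eq_abs, abs_div, abs_pow]
      push_cast
      calc |z| ^ n / |(n:ℝ) + 1| ≤ |z| ^ n / 1 := by
            apply div_le_div_of_nonneg_left (by positivity) one_pos ?_ |>.trans_eq rfl
            rw [abs_of_pos (by linarith)]; linarith
        _ = |z| ^ n := by ring
        _ ≤ r ^ n := pow_le_pow_left₀ (abs_nonneg z) hz'.le n)
    (y₀ := 0) (by simpa [Real.dist_eq] using (by positivity : (0:ℝ) < r))
    (by simpa using summable_zero)
    (by simpa [Real.dist_eq] using hrt)
  exact this

lemma Li2_hasDerivAt' {t : ℝ} (ht : |t| < 1) (h0 : t ≠ 0) :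
    HasDerivAt Li2 (-Real.log (1 - t) / t) t := by
  have H := (Real.hasSum_pow_div_log_of_abs_lt_one ht).div_const t
  have H' : HasSum (fun n : ℕ => t ^ n / ((n + 1 : ℕ) : ℝ)) (-Real.log (1 - t) / t) := by
    convert H using 2 with n
    · rfl
    have h1 : ((n:ℝ) + 1) ≠ 0 := by positivity
    push_cast
    field_simp
    ring
  rw [← H'.tsum_eq]
  exact Li2_hasDerivAt ht
lemma constAux {F : ℝ → ℝ} {x : ℝ} (hc : ContinuousOn F (Set.uIcc 0 x))
    (hd : ∀ t ∈ Set.uIcc 0 x, t ≠ 0 → HasDerivAt F 0 t) : F x = F 0 := by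
  rcases lt_trichotomy x 0 with hx | rfl | hx
  · have huIcc : Set.uIcc 0 x = Set.Icc x 0 := by
      rw [Set.uIcc_of_ge hx.le]
    rw [huIcc] at hc hd
    have key : ∀ ε ∈ Set.Ico x 0, F ε = F x := by
      intro ε hε
      have hsub : Set.Icc x ε ⊆ Set.Icc x 0 := Set.Icc_subset_Icc le_rfl hε.2.le
      exact constant_of_has_deriv_right_zero (hc.mono hsub)
        (fun t ht => (hd t (Set.Ico_subset_Icc_self (Set.Ico_subset_Ico le_rfl hε.2.le ht))
          (by rcases ht with ⟨_, h2⟩; exact ne_of_lt (lt_of_lt_of_le h2 hε.2.le))).hasDerivWithinAt)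
        ε ⟨hε.1, le_rfl⟩
    have hne : (nhdsWithin (0:ℝ) (Set.Ico x 0)).NeBot := by
      rw [← mem_closure_iff_nhdsWithin_neBot, closure_Ico (ne_of_lt hx)]
      exact ⟨hx.le, le_rfl⟩
    have h1 : Tendsto F (nhdsWithin 0 (Set.Ico x 0)) (nhds (F 0)) :=
      ((hc 0 ⟨hx.le, le_rfl⟩).mono Set.Ico_subset_Icc_self).tendsto
    have h2 : Tendsto F (nhdsWithin 0 (Set.Ico x 0)) (nhds (F x)) := by
      refine Tendsto.congr' ?_ tendsto_const_nhds
      exact Filter.eventually_of_mem self_mem_nhdsWithin (fun ε hε => (key ε hε).symm)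
    exact (tendsto_nhds_unique h2 h1).symm ▸ rfl
  · rfl
  · have huIcc : Set.uIcc 0 x = Set.Icc 0 x := by rw [Set.uIcc_of_le hx.le]
    rw [huIcc] at hc hd
    have key : ∀ ε ∈ Set.Ioc 0 x, F x = F ε := by
      intro ε hε
      have hsub : Set.Icc ε x ⊆ Set.Icc 0 x := Set.Icc_subset_Icc hε.1.le le_rfl
      exact constant_of_has_deriv_right_zero (hc.mono hsub)
        (fun t ht => (hd t (Set.Ico_subset_Icc_self (Set.Ico_subset_Ico hε.1.le le_rfl ht))
          (ne_of_gt (lt_of_lt_of_le hε.1 ht.1))).hasDerivWithinAt)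
        x ⟨hε.2, le_rfl⟩
    have hne : (nhdsWithin (0:ℝ) (Set.Ioc 0 x)).NeBot := by
      rw [← mem_closure_iff_nhdsWithin_neBot, closure_Ioc (ne_of_lt hx)]
      exact ⟨le_rfl, hx.le⟩
    have h1 : Tendsto F (nhdsWithin 0 (Set.Ioc 0 x)) (nhds (F 0)) :=
      ((hc 0 ⟨le_rfl, hx.le⟩).mono Set.Ioc_subset_Icc_self).tendsto
    have h2 : Tendsto F (nhdsWithin 0 (Set.Ioc 0 x)) (nhds (F x)) := by
      refine Tendsto.congr' ?_ tendsto_const_nhds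
      exact Filter.eventually_of_mem self_mem_nhdsWithin (fun ε hε => key ε hε)
    exact tendsto_nhds_unique h2 h1

lemma bounds {x y t : ℝ} (h : |x| + |y| < 1) (ht : |t| ≤ |x|) :
    |t| < 1 ∧ 0 < 1 - t ∧ 0 < 1 - y ∧ 0 < 1 - t - y ∧
    |t / (1 - y)| < 1 ∧ |y / (1 - t)| < 1 ∧ |t * y / ((1 - t) * (1 - y))| < 1 := by
  have h1 := abs_nonneg x; have h2 := abs_nonneg y; have h3 := abs_nonneg t
  have h4 := le_abs_self t; have h5 := neg_abs_le t
  have h6 := le_abs_self y; have h7 := neg_abs_le y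
  have ht1 : |t| < 1 := by linarith
  have p1 : 0 < 1 - t := by linarith
  have p2 : 0 < 1 - y := by linarith
  have p3 : 0 < 1 - t - y := by linarith
  refine ⟨ht1, p1, p2, p3, ?_, ?_, ?_⟩
  · rw [abs_div, abs_of_pos p2, div_lt_one p2]; linarith
  · rw [abs_div, abs_of_pos p1, div_lt_one p1]; linarith
  · rw [abs_div, abs_mul, abs_of_pos (mul_pos p1 p2), div_lt_one (mul_pos p1 p2)]
    nlinarith [mul_le_mul (by linarith : (1 - |t| : ℝ) ≤ 1 - t)
      (by linarith : (1 - |y| : ℝ) ≤ 1 - y) (by linarith) (by linarith : (0:ℝ) ≤ 1 - t),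
      mul_nonneg h3 h2]

theorem stmt15 (x y : ℝ) (h : |x| + |y| < 1) :
    Li2 x + Li2 y - Li2 (x / (1 - y)) - Li2 (y / (1 - x))
      + Li2 (x * y / ((1 - x) * (1 - y)))
      = -(Real.log (1 - x) * Real.log (1 - y)) := by
  rcases eq_or_ne y 0 with rfl | hy0
  · norm_num [Li2_zero]
  set F : ℝ → ℝ := fun t => Li2 t + Li2 y - Li2 (t / (1 - y)) - Li2 (y / (1 - t))
      + Li2 (t * y / ((1 - t) * (1 - y))) + Real.log (1 - t) * Real.log (1 - y) with hF
  have habs : ∀ t ∈ Set.uIcc 0 x, |t| ≤ |x| := by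
    intro t htm
    rcases Set.mem_uIcc.1 htm with ⟨h1, h2⟩ | ⟨h1, h2⟩
    · rw [abs_le]; constructor <;> nlinarith [le_abs_self x, neg_abs_le x]
    · rw [abs_le]; constructor <;> nlinarith [le_abs_self x, neg_abs_le x]
  have hcont : ContinuousOn F (Set.uIcc 0 x) := by
    intro t htm
    obtain ⟨ht1, p1, p2, p3, hc1, hd1, he1⟩ := bounds h (habs t htm)
    have cLi2 : ∀ z : ℝ, |z| < 1 → ContinuousAt Li2 z := fun z hz =>
      (Li2_hasDerivAt hz).continuousAt
    have i1 : ContinuousAt (fun s : ℝ => s / (1 - y)) t := by fun_prop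
    have i2 : ContinuousAt (fun s : ℝ => y / (1 - s)) t :=
      ContinuousAt.div (by fun_prop) (by fun_prop) p1.ne'
    have i3 : ContinuousAt (fun s : ℝ => s * y / ((1 - s) * (1 - y))) t :=
      ContinuousAt.div (by fun_prop) (by fun_prop) (mul_pos p1 p2).ne'
    have i4 : ContinuousAt (fun s : ℝ => Real.log (1 - s)) t :=
      ContinuousAt.comp (x := t) (Real.continuousAt_log p1.ne') (by fun_prop)
    exact (((((((cLi2 t ht1).add continuousAt_const).sub
      (ContinuousAt.comp (x := t) (cLi2 _ hc1) i1)).sub (ContinuousAt.comp (x := t) (cLi2 _ hd1) i2)).add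
      (ContinuousAt.comp (x := t) (cLi2 _ he1) i3)).add (i4.mul continuousAt_const))).continuousWithinAt
  have hderiv : ∀ t ∈ Set.uIcc 0 x, t ≠ 0 → HasDerivAt F 0 t := by
    intro t htm h0
    obtain ⟨ht1, p1, p2, p3, hc1, hd1, he1⟩ := bounds h (habs t htm)
    have hc0 : t / (1 - y) ≠ 0 := div_ne_zero h0 (ne_of_gt p2)
    have hd0 : y / (1 - t) ≠ 0 := div_ne_zero hy0 (ne_of_gt p1)
    have he0 : t * y / ((1 - t) * (1 - y)) ≠ 0 :=
      div_ne_zero (mul_ne_zero h0 hy0) (ne_of_gt (mul_pos p1 p2))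
    have hA := Li2_hasDerivAt' ht1 h0
    have hC := (Li2_hasDerivAt' hc1 hc0).comp t ((hasDerivAt_id t).div_const (1 - y))
    have hDin := (hasDerivAt_const t y).div ((hasDerivAt_id t).const_sub 1) (ne_of_gt p1)
    have hD := (Li2_hasDerivAt' hd1 hd0).comp t hDin
    have hEin := ((hasDerivAt_id t).mul_const y).div
      (((hasDerivAt_id t).const_sub 1).mul_const (1 - y)) (ne_of_gt (mul_pos p1 p2))
    have hE := (Li2_hasDerivAt' he1 he0).comp t hEin
    have hL := ((Real.hasDerivAt_log (ne_of_gt p1)).comp t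
      ((hasDerivAt_id t).const_sub 1)).mul_const (Real.log (1 - y))
    have hFt := ((((hA.add_const (Li2 y)).sub hC).sub hD).add hE).add hL
    convert hFt using 1
    · rfl
    · rfl
    · rfl
    have hlog1 : Real.log (1 - t / (1 - y)) = Real.log (1 - t - y) - Real.log (1 - y) := by
      rw [show 1 - t / (1 - y) = (1 - t - y) / (1 - y) by field_simp; ring]
      exact Real.log_div (ne_of_gt p3) (ne_of_gt p2)
    have hlog2 : Real.log (1 - y / (1 - t)) = Real.log (1 - t - y) - Real.log (1 - t) := by
      rw [show 1 - y / (1 - t) = (1 - t - y) / (1 - t) by field_simp]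
      exact Real.log_div (ne_of_gt p3) (ne_of_gt p1)
    have hlog3 : Real.log (1 - t * y / ((1 - t) * (1 - y)))
        = Real.log (1 - t - y) - Real.log (1 - t) - Real.log (1 - y) := by
      rw [show 1 - t * y / ((1 - t) * (1 - y)) = (1 - t - y) / ((1 - t) * (1 - y)) by
        field_simp; ring]
      rw [Real.log_div (ne_of_gt p3) (ne_of_gt (mul_pos p1 p2)),
        Real.log_mul (ne_of_gt p1) (ne_of_gt p2)]
      ring
    rw [hlog1, hlog2, hlog3]
    simp only [id]
    field_simp
    ring
  have hkey := constAux hcont hderiv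
  have hF0 : F 0 = 0 := by
    simp only [hF]
    norm_num [Li2_zero]
  have hFx : F x = 0 := by rw [hkey, hF0]
  simp only [hF] at hFx
  linarith
end

section
/- Let ω be a real root of u^3 + u^2 - 1. Then 1 + ω^4 = ω^{-1} and 1 - ω^5 = ω; moreover the three roots of x^2(1-x)^{-3} = t^2(1-t)^2/(1-t+t^2)^3 specialized at t = -ω are -ω^{-1}, ω^5, and -ω^{-4}. -/
theorem stmt19 (ω : ℝ) (hω : ω ^ 3 + ω ^ 2 - 1 = 0) :
    1 + ω ^ 4 = ω⁻¹ ∧ 1 - ω ^ 5 = ω ∧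
    ∀ x ∈ ({-ω⁻¹, ω ^ 5, -(ω ^ 4)⁻¹} : Set ℝ),
      x ^ 2 / (1 - x) ^ 3
        = (-ω) ^ 2 * (1 - -ω) ^ 2 / (1 - -ω + (-ω) ^ 2) ^ 3 := by
  have h0 : ω ≠ 0 := by rintro rfl; norm_num at hω
  have h1 : 1 + ω ≠ 0 := by
    intro h
    have : ω = -1 := by linarith
    rw [this] at hω; norm_num at hω
  have h3 : 1 + ω + ω ^ 2 ≠ 0 := by nlinarith [sq_nonneg (2*ω+1)]
  have key2 : 1 - ω ^ 5 = ω := by linear_combination (-(ω^2) + ω - 1) * hω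
  have h4 : 1 - ω ^ 5 ≠ 0 := by rw [key2]; exact h0
  have h2 : ω ^ 4 + 1 ≠ 0 := by positivity
  have h1' : ω - -1 ≠ 0 := by intro h; exact h1 (by linarith)
  have h3' : 1 - -ω + ω ^ 2 ≠ 0 := by intro h; exact h3 (by linarith)
  have h2' : ω ^ 4 - -1 ≠ 0 := by intro h; exact h2 (by linarith)
  refine ⟨?_, key2, ?_⟩
  · field_simp
    linear_combination (ω^2 - ω + 1) * hω
  · rintro x (rfl | rfl | rfl)
    · field_simp
      linear_combination (-1 - 2*ω - 2*ω^2) * hω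
    · field_simp
      linear_combination (1 + 2*ω + 2*ω^2 + 3*ω^3 + 4*ω^4 + 2*ω^5 + ω^6
        + 3*ω^7 + 2*ω^8 + ω^9 + 2*ω^10 + 2*ω^11 + ω^13 + ω^14) * hω
    · field_simp
      linear_combination (1 + 2*ω + ω^2 - 3*ω^6 - 3*ω^7 - ω^8
        - ω^10 - ω^11) * hω
end
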